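/- For every n ≥ 3, there is an n-state DFA M over {0,1} such that the minimal DFA for fact(L(M)) has exactly 2^(n−1) states. Specifically, take states {0,...,n-1}, start state 0, final set {0}, δ(q,0)=q for 0 ≤ q < n-2, δ(n-2,0)=δ(n-1,0)=n-1, δ(q,1)=q+1 for 0 ≤ q < n-2, δ(n-2,1)=0, δ(n-1,1)=n-1. -/

import Mathlib

/-- The DFA of Theorem `subword`: states `{0,…,n-1}`, start `0`, final set `{0}`, with
`δ(q,0) = q` for `0 ≤ q < n-2`, `δ(n-2,0) = δ(n-1,0) = n-1`,
`δ(q,1) = q+1` for `0 ≤ q < n-2`, `δ(n-2,1) = 0`, and `δ(n-1,1) = n-1`. -/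
def factWitnessDFA (n : ℕ) [NeZero n] : DFA (Fin 2) (Fin n) where
  step q a :=
    if a = 0 then
      (if q.val + 2 < n then q else -1)
    else
      (if q.val + 2 < n then q + 1 else if q.val + 2 = n then 0 else -1)
  start := 0
  accept := {0}

section Aux
variable {m : ℕ} [NeZero m]
open Fin.NatCast Fin.CommRing

/-- the "last live state" -/
def lastF (m : ℕ) [NeZero m] : Fin m := ⟨m - 1, by have := Nat.pos_of_ne_zero (NeZero.ne m); omega⟩

def step1 (s : Fin m) (a : Fin 2) : Option (Fin m) :=
  if a = 0 then (if s = lastF m then none else some s) else some (s + 1)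

@[simp] lemma step1_zero (s : Fin m) : step1 s 0 = if s = lastF m then none else some s := by
  simp [step1]

@[simp] lemma step1_one (s : Fin m) : step1 s 1 = some (s + 1) := by
  simp [step1]

def evalO (o : Option (Fin m)) (l : List (Fin 2)) : Option (Fin m) :=
  l.foldl (fun o a => o.bind (fun s => step1 s a)) o

@[simp] lemma evalO_nil (o : Option (Fin m)) : evalO o [] = o := rfl

@[simp] lemma evalO_cons (o : Option (Fin m)) (a : Fin 2) (l : List (Fin 2)) :
    evalO o (a :: l) = evalO (o.bind (fun s => step1 s a)) l := rfl

@[simp] lemma evalO_append (o : Option (Fin m)) (l₁ l₂ : List (Fin 2)) :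
    evalO o (l₁ ++ l₂) = evalO (evalO o l₁) l₂ := List.foldl_append ..

@[simp] lemma evalO_none (l : List (Fin 2)) : evalO (none : Option (Fin m)) l = none := by
  induction l with
  | nil => rfl
  | cons a l ih => simpa using ih

lemma evalO_replicate (s : Fin m) (r : ℕ) :
    evalO (some s) (List.replicate r 1) = some (s + (r : Fin m)) := by
  induction r generalizing s with
  | zero => simp
  | succ r ih =>
    rw [List.replicate_succ, evalO_cons]
    have h1 : step1 s (1 : Fin 2) = some (s + 1) := by simp [step1]
    rw [show (some s).bind (fun s => step1 s (1:Fin 2)) = some (s+1) from by simp [step1], ih]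
    congr 1
    push_cast
    ring

def powDFA (m : ℕ) [NeZero m] : DFA (Fin 2) (Finset (Fin m)) where
  step S a := if a = 0 then S.erase (lastF m) else S.image (· + 1)
  start := Finset.univ
  accept := {S | S.Nonempty}

lemma powStep_def (S : Finset (Fin m)) (a : Fin 2) :
    (powDFA m).step S a = if a = 0 then S.erase (lastF m) else S.image (· + 1) := rfl

lemma mem_powStep_iff (S : Finset (Fin m)) (a : Fin 2) (t : Fin m) :
    t ∈ (powDFA m).step S a ↔ ∃ s ∈ S, step1 s a = some t := by
  rw [powStep_def]
  by_cases h : a = 0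
  · subst h
    rw [if_pos rfl]
    simp only [Finset.mem_erase, step1_zero]
    constructor
    · rintro ⟨h1, h2⟩
      exact ⟨t, h2, by rw [if_neg h1]⟩
    · rintro ⟨s, hs, hst⟩
      by_cases hsl : s = lastF m
      · rw [if_pos hsl] at hst; exact absurd hst (by simp)
      · rw [if_neg hsl] at hst
        obtain rfl : s = t := by injection hst
        exact ⟨hsl, hs⟩
  · obtain rfl : a = 1 := by omega
    rw [if_neg h]
    simp only [Finset.mem_image, step1_one, Option.some.injEq]

lemma mem_powEvalFrom_iff (v : List (Fin 2)) (S : Finset (Fin m)) (t : Fin m) :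
    t ∈ (powDFA m).evalFrom S v ↔ ∃ s ∈ S, evalO (some s) v = some t := by
  induction v generalizing S with
  | nil => simp
  | cons a v ih =>
    rw [show (powDFA m).evalFrom S (a :: v) = (powDFA m).evalFrom ((powDFA m).step S a) v from rfl,
      ih]
    constructor
    · rintro ⟨s', hs', hev⟩
      rw [mem_powStep_iff] at hs'
      obtain ⟨s, hs, hstep⟩ := hs'
      exact ⟨s, hs, by rw [evalO_cons, Option.bind_some, hstep]; exact hev⟩
    · rintro ⟨s, hs, hev⟩
      rw [evalO_cons, Option.bind_some] at hev
      cases h : step1 s a with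
      | none => rw [h] at hev; simp at hev
      | some s' =>
        rw [h] at hev
        exact ⟨s', (mem_powStep_iff ..).2 ⟨s, hs, h⟩, by simpa using hev⟩

def killWord (t : Fin m) : List (Fin 2) :=
  List.replicate (lastF m - t).val 1 ++ [0] ++ List.replicate (t - lastF m).val 1

lemma evalO_single_zero (s : Fin m) :
    evalO (some s) [0] = if s = lastF m then none else some s := by
  show evalO ((some s).bind fun s => step1 s 0) [] = _
  rw [Option.bind_some, step1_zero, evalO_nil]

lemma evalO_killWord (s t : Fin m) :
    evalO (some s) (killWord t) = if s = t then none else some s := by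
  unfold killWord
  rw [evalO_append, evalO_append, evalO_replicate, Fin.cast_val_eq_self, evalO_single_zero]
  have hiff : s + (lastF m - t) = lastF m ↔ s = t := by
    constructor
    · intro h; linear_combination h
    · intro h; linear_combination h
  by_cases h : s = t
  · rw [if_pos h, if_pos (hiff.2 h), evalO_none]
  · rw [if_neg h, if_neg (fun hc => h (hiff.1 hc)), evalO_replicate, Fin.cast_val_eq_self]
    congr 1
    ring

def killList : List (Fin m) → List (Fin 2)
  | [] => []
  | t :: l => killWord t ++ killList l

lemma evalO_killList (s : Fin m) (l : List (Fin m)) :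
    evalO (some s) (killList l) = if s ∈ l then none else some s := by
  induction l with
  | nil => simp [killList]
  | cons t l ih =>
    rw [killList, evalO_append, evalO_killWord]
    by_cases h : s = t
    · simp [h]
    · rw [if_neg h, ih]
      simp [h]

lemma powEvalFrom_killList (T : Finset (Fin m)) (l : List (Fin m)) :
    (powDFA m).evalFrom T (killList l) = T.filter (· ∉ l) := by
  ext t
  rw [mem_powEvalFrom_iff, Finset.mem_filter]
  constructor
  · rintro ⟨s, hs, hev⟩
    rw [evalO_killList] at hev
    by_cases h : s ∈ l
    · simp [h] at hev
    · rw [if_neg h] at hev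
      obtain rfl : s = t := by injection hev
      exact ⟨hs, h⟩
  · rintro ⟨ht, hl⟩
    exact ⟨t, ht, by rw [evalO_killList, if_neg hl]⟩

lemma mem_powAccepts_iff (v : List (Fin 2)) :
    v ∈ (powDFA m).accepts ↔ ∃ s t : Fin m, evalO (some s) v = some t := by
  rw [DFA.mem_accepts]
  change ((powDFA m).evalFrom Finset.univ v).Nonempty ↔ _
  constructor
  · rintro ⟨t, ht⟩
    rw [mem_powEvalFrom_iff] at ht
    obtain ⟨s, _, hev⟩ := ht
    exact ⟨s, t, hev⟩
  · rintro ⟨s, t, hev⟩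
    exact ⟨t, (mem_powEvalFrom_iff ..).2 ⟨s, Finset.mem_univ s, hev⟩⟩

end Aux

section Bridge

variable {m : ℕ} [NeZero m]
open Fin.NatCast Fin.CommRing

/-- embedding of live states -/
def eL (s : Fin m) : Fin (m + 1) := ⟨s.val, by omega⟩

/-- the dead state -/
def deadS (m : ℕ) : Fin (m + 1) := ⟨m, by omega⟩

lemma hm1 : 1 ≤ m := Nat.pos_of_ne_zero (NeZero.ne m)

lemma lastF_iff (s : Fin m) : s = lastF m ↔ s.val = m - 1 := by
  rw [Fin.ext_iff]; rfl

lemma stepE (hm : 2 ≤ m) (s : Fin m) (a : Fin 2) :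
    (factWitnessDFA (m + 1)).step (eL s) a = (step1 s a).elim (deadS m) eL := by
  have hsv : s.val < m := s.isLt
  have hev : (eL s).val = s.val := rfl
  show (if a = 0 then _ else _) = _
  by_cases h : a = 0
  · subst h
    rw [if_pos rfl, step1_zero]
    by_cases hs : s = lastF m
    · have : s.val = m - 1 := (lastF_iff s).1 hs
      rw [if_neg (by omega), if_pos hs]
      show (-1 : Fin (m + 1)) = deadS m
      ext
      rw [Fin.coe_neg_one]; rfl
    · have : s.val ≠ m - 1 := fun hc => hs ((lastF_iff s).2 hc)
      rw [if_pos (by omega), if_neg hs]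
      rfl
  · obtain rfl : a = 1 := by omega
    rw [if_neg h, step1_one]
    by_cases hs : s = lastF m
    · have hv : s.val = m - 1 := (lastF_iff s).1 hs
      rw [if_neg (by omega), if_pos (by omega)]
      show (0 : Fin (m + 1)) = eL (s + 1)
      ext
      show 0 = ((s + 1 : Fin m) : ℕ)
      rw [Fin.add_def]
      simp only [Fin.val_one']
      rw [Nat.mod_eq_of_lt (show 1 < m by omega), show s.val + 1 = m from by omega,
        Nat.mod_self]
    · have hv : s.val ≠ m - 1 := fun hc => hs ((lastF_iff s).2 hc)
      rw [if_pos (by omega)]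
      show (eL s + 1 : Fin (m + 1)) = eL (s + 1)
      ext
      rw [Fin.add_def, Fin.add_def]
      simp only [Fin.val_one', hev]
      show (s.val + 1 % (m + 1)) % (m + 1) = (s.val + 1 % m) % m
      rw [Nat.mod_eq_of_lt (show 1 < m + 1 by omega), Nat.mod_eq_of_lt (show 1 < m by omega),
        Nat.mod_eq_of_lt (by omega), Nat.mod_eq_of_lt (by omega)]

lemma step_dead (a : Fin 2) :
    (factWitnessDFA (m + 1)).step (deadS m) a = deadS m := by
  show (if a = 0 then _ else _) = _
  have hd : (deadS m).val = m := rfl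
  have hne : (-1 : Fin (m + 1)) = deadS m := by ext; rw [Fin.coe_neg_one]; rfl
  by_cases h : a = 0
  · subst h; rw [if_pos rfl, if_neg (by omega)]; exact hne
  · rw [if_neg h, if_neg (by omega), if_neg (by omega)]; exact hne

lemma evalFromE (hm : 2 ≤ m) (v : List (Fin 2)) (o : Option (Fin m)) :
    (factWitnessDFA (m + 1)).evalFrom (o.elim (deadS m) eL) v = (evalO o v).elim (deadS m) eL := by
  induction v generalizing o with
  | nil => rfl
  | cons a v ih =>
    show (factWitnessDFA (m + 1)).evalFrom
      ((factWitnessDFA (m + 1)).step (o.elim (deadS m) eL) a) v = _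
    rw [evalO_cons]
    cases o with
    | none =>
      rw [show Option.elim (none : Option (Fin m)) (deadS m) eL = deadS m from rfl, step_dead]
      exact ih none
    | some s =>
      rw [show (Option.elim (some s) (deadS m) eL) = eL s from rfl, stepE hm,
        Option.bind_some]
      exact ih (step1 s a)

lemma mem_factWitness_accepts (hm : 2 ≤ m) (v : List (Fin 2)) :
    v ∈ (factWitnessDFA (m + 1)).accepts ↔ evalO (some (0 : Fin m)) v = some 0 := by
  rw [DFA.mem_accepts]
  have hstart : (factWitnessDFA (m + 1)).start = Option.elim (some (0 : Fin m)) (deadS m) eL := by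
    show (0 : Fin (m + 1)) = eL 0
    ext; rfl
  show (factWitnessDFA (m + 1)).evalFrom (factWitnessDFA (m + 1)).start v ∈ ({0} : Set _) ↔ _
  rw [hstart, evalFromE hm]
  cases h : evalO (some (0 : Fin m)) v with
  | none =>
    simp only [Option.elim, Set.mem_singleton_iff]
    constructor
    · intro hc
      exact absurd (congrArg Fin.val hc) (by show m ≠ 0; omega)
    · intro hc; exact absurd hc (by simp)
  | some t =>
    simp only [Option.elim, Set.mem_singleton_iff, Option.some.injEq]
    constructor
    · intro hc
      have h2 := congrArg Fin.val hc
      exact Fin.ext h2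
    · intro hc; rw [hc]; exact Fin.ext rfl

lemma fact_eq_powAccepts (hm : 2 ≤ m) :
    {v : List (Fin 2) | ∃ u w, u ++ v ++ w ∈ (factWitnessDFA (m + 1)).accepts} =
      (powDFA m).accepts := by
  ext v
  rw [Set.mem_setOf_eq]; refine Iff.trans ?_ (mem_powAccepts_iff v).symm
  constructor
  · rintro ⟨u, w, h⟩
    rw [mem_factWitness_accepts hm, show u ++ v ++ w = u ++ (v ++ w) from by simp,
      evalO_append, evalO_append] at h
    cases h1 : evalO (some (0 : Fin m)) u with
    | none => rw [h1, evalO_none, evalO_none] at h; exact absurd h (by simp)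
    | some s =>
      rw [h1] at h
      cases h2 : evalO (some s) v with
      | none => rw [h2, evalO_none] at h; exact absurd h (by simp)
      | some t => exact ⟨s, t, h2⟩
  · rintro ⟨s, t, h⟩
    refine ⟨List.replicate s.val 1, List.replicate (m - t.val) 1, ?_⟩
    rw [mem_factWitness_accepts hm, show List.replicate s.val (1 : Fin 2) ++ v ++
      List.replicate (m - t.val) 1 = List.replicate s.val 1 ++ (v ++ List.replicate (m - t.val) 1)
      from by simp, evalO_append, evalO_replicate, zero_add, Fin.cast_val_eq_self, evalO_append,
      h, evalO_replicate]
    congr 1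
    rw [Nat.cast_sub (le_of_lt t.isLt), Fin.natCast_self, Fin.cast_val_eq_self]
    ring

end Bridge

theorem fact_state_complexity_tight (n : ℕ) [NeZero n] (hn : 3 ≤ n) :
    (∃ (τ : Type) (_ : Fintype τ) (D' : DFA (Fin 2) τ),
        D'.accepts =
          {v : List (Fin 2) | ∃ u w, u ++ v ++ w ∈ (factWitnessDFA n).accepts} ∧
        Fintype.card τ = 2 ^ (n - 1)) ∧
    (∀ (τ : Type) (_ : Fintype τ) (D' : DFA (Fin 2) τ),
        D'.accepts =
          {v : List (Fin 2) | ∃ u w, u ++ v ++ w ∈ (factWitnessDFA n).accepts} →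
        2 ^ (n - 1) ≤ Fintype.card τ) := by
  obtain ⟨m, rfl⟩ : ∃ m, n = m + 1 := ⟨n - 1, by omega⟩
  have hm : 2 ≤ m := by omega
  haveI : NeZero m := ⟨by omega⟩
  simp only [Nat.add_sub_cancel]
  have hfact := fact_eq_powAccepts (m := m) hm
  constructor
  · refine ⟨Finset (Fin m), inferInstance, powDFA m, hfact.symm, ?_⟩
    rw [Fintype.card_finset, Fintype.card_fin]
  · intro τ _ D hD
    rw [hfact] at hD
    -- injective map from Finset (Fin m) into τ
    have hinj : Function.Injective (fun S : Finset (Fin m) => D.eval (killList Sᶜ.toList)) := by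
      intro S S' hSS'
      simp only at hSS'
      -- evalFrom facts in powDFA
      have hevalS : ∀ S : Finset (Fin m),
          (powDFA m).evalFrom (powDFA m).start (killList Sᶜ.toList) = S := by
        intro S
        rw [show (powDFA m).start = Finset.univ from rfl, powEvalFrom_killList]
        ext t
        simp [Finset.mem_filter]
      have key : ∀ x : List (Fin 2),
          ((powDFA m).evalFrom S x).Nonempty ↔ ((powDFA m).evalFrom S' x).Nonempty := by
        intro x
        have h1 : ∀ T : Finset (Fin m),
            (killList Tᶜ.toList ++ x ∈ (powDFA m).accepts ↔
              ((powDFA m).evalFrom T x).Nonempty) := by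
          intro T
          rw [DFA.mem_accepts]
          change (powDFA m).evalFrom (powDFA m).start (killList Tᶜ.toList ++ x) ∈ _ ↔ _
          rw [DFA.evalFrom_of_append, hevalS T]
          exact Iff.rfl
        have hSS2 : D.evalFrom D.start (killList Sᶜ.toList) =
            D.evalFrom D.start (killList S'ᶜ.toList) := hSS'
        rw [← h1 S, ← h1 S', ← hD, DFA.mem_accepts, DFA.mem_accepts]
        change D.evalFrom D.start (_ ++ x) ∈ _ ↔ D.evalFrom D.start (_ ++ x) ∈ _
        rw [DFA.evalFrom_of_append, DFA.evalFrom_of_append, hSS2]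
      ext t
      have hx := key (killList ({t}ᶜ : Finset (Fin m)).toList)
      rw [powEvalFrom_killList, powEvalFrom_killList] at hx
      have hiff : ∀ T : Finset (Fin m),
          (T.filter (· ∉ ({t}ᶜ : Finset (Fin m)).toList)).Nonempty ↔ t ∈ T := by
        intro T
        constructor
        · rintro ⟨y, hy⟩
          rw [Finset.mem_filter] at hy
          obtain ⟨hyT, hyl⟩ := hy
          have : y = t := by
            by_contra hc
            exact hyl (by simp [hc])
          rwa [this] at hyT
        · intro ht
          exact ⟨t, Finset.mem_filter.2 ⟨ht, by simp⟩⟩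
      rw [hiff, hiff] at hx
      exact hx
    calc 2 ^ m = Fintype.card (Finset (Fin m)) := by
            rw [Fintype.card_finset, Fintype.card_fin]
      _ ≤ Fintype.card τ := Fintype.card_le_of_injective _ hinj
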